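/- For a standard Gaussian random variable Z and any real z, the Hermite coefficient of the indicator function of the interval (z, ∞) of order q ≥ 1 is given by E[1(Z > z) H_q(Z)] = H_{q-1}(z) φ(z), where H_q denotes the q-th probabilists' Hermite polynomial and φ the standard Gaussian density. -/

import Mathlib

open MeasureTheory ProbabilityTheory Polynomial
open scoped ENNReal NNReal

/-- Standard Gaussian density. -/
noncomputable def stdGaussianPDF (t : ℝ) : ℝ := (2 * Real.pi) ^ (-(1:ℝ)/2) * Real.exp (-t^2 / 2)

/-- Probabilists' Hermite polynomial evaluated at a real. -/
noncomputable def hermiteR (q : ℕ) (t : ℝ) : ℝ := Polynomial.aeval t (Polynomial.hermite q)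

lemma stdGaussianPDF_eq (t : ℝ) : stdGaussianPDF t = gaussianPDFReal 0 1 t := by
  have h2π : (0:ℝ) ≤ 2 * Real.pi := by positivity
  rw [stdGaussianPDF, gaussianPDFReal]
  have : ((2 * Real.pi) : ℝ) ^ (-(1:ℝ)/2) = (Real.sqrt (2 * Real.pi * (1:NNReal)))⁻¹ := by
    rw [show (-(1:ℝ)/2) = -(1/2 : ℝ) by norm_num, Real.rpow_neg h2π, Real.sqrt_eq_rpow]
    norm_num
  rw [this]
  norm_num

lemma hermiteR_eq (q : ℕ) (t : ℝ) :
    hermiteR q t = ((Polynomial.hermite q).map (algebraMap ℤ ℝ)).eval t := by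
  rw [hermiteR, Polynomial.aeval_def, Polynomial.eval₂_eq_eval_map]

lemma hasDerivAt_stdGaussianPDF (t : ℝ) :
    HasDerivAt stdGaussianPDF (-t * stdGaussianPDF t) t := by
  have h1 : HasDerivAt (fun t : ℝ => -t^2/2) (-t) t := by
    have := ((hasDerivAt_pow 2 t).neg).div_const 2
    refine this.congr_deriv ?_
    ring
  have h := (h1.exp).const_mul ((2 * Real.pi) ^ (-(1:ℝ)/2))
  have h' : HasDerivAt stdGaussianPDF
      ((2 * Real.pi) ^ (-(1:ℝ)/2) * (Real.exp (-t^2/2) * -t)) t := h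
  convert h' using 1
  rw [stdGaussianPDF]
  ring

lemma hasDerivAt_hermite_mul (n : ℕ) (t : ℝ) :
    HasDerivAt (fun s => hermiteR n s * stdGaussianPDF s)
      (-(hermiteR (n+1) t * stdGaussianPDF t)) t := by
  have hH : HasDerivAt (fun s => hermiteR n s)
      (((Polynomial.hermite n).map (algebraMap ℤ ℝ)).derivative.eval t) t := by
    simp_rw [hermiteR_eq]
    exact Polynomial.hasDerivAt _ t
  have h := hH.mul (hasDerivAt_stdGaussianPDF t)
  refine h.congr_deriv ?_
  have hsucc : hermiteR (n+1) t
      = t * hermiteR n t - ((Polynomial.hermite n).map (algebraMap ℤ ℝ)).derivative.eval t := by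
    rw [hermiteR_eq, Polynomial.hermite_succ, Polynomial.map_sub, Polynomial.map_mul,
      Polynomial.derivative_map]
    simp [hermiteR_eq]
  rw [hsucc, hermiteR_eq]
  ring

lemma tendsto_poly_mul_pdf (p : Polynomial ℝ) :
    Filter.Tendsto (fun t => p.eval t * stdGaussianPDF t) Filter.atTop (nhds 0) := by
  set c : ℝ := (2 * Real.pi) ^ (-(1:ℝ)/2)
  have h1 : Filter.Tendsto (fun t : ℝ => p.eval t / Real.exp t) Filter.atTop (nhds 0) :=
    Polynomial.tendsto_div_exp_atTop p
  have h2 : Filter.Tendsto (fun t : ℝ => t - t^2/2) Filter.atTop Filter.atBot := by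
    have h : Filter.Tendsto (fun t : ℝ => t * (t/2 - 1)) Filter.atTop Filter.atTop := by
      apply Filter.Tendsto.atTop_mul_atTop₀ Filter.tendsto_id
      apply Filter.tendsto_atTop_add_const_right
      exact Filter.tendsto_id.atTop_div_const two_pos
    have := Filter.tendsto_neg_atBot_iff.mpr h
    refine this.congr (fun t => by ring)
  have h3 : Filter.Tendsto (fun t : ℝ => c * Real.exp (t - t^2/2)) Filter.atTop (nhds 0) := by
    have := Real.tendsto_exp_atBot.comp h2
    simpa using this.const_mul c
  have h4 := h1.mul h3
  rw [zero_mul] at h4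
  refine h4.congr (fun t => ?_)
  have het : Real.exp t ≠ 0 := Real.exp_ne_zero t
  rw [show t - t^2/2 = t + (-t^2/2) by ring, Real.exp_add, stdGaussianPDF]
  field_simp
  ring_nf
  rw [mul_comm Real.pi 2]

lemma integrable_poly_mul_pdf (p : Polynomial ℝ) :
    Integrable (fun t => p.eval t * stdGaussianPDF t) := by
  induction p using Polynomial.induction_on' with
  | add p q hp hq => simpa [add_mul, Pi.add_def] using hp.add hq
  | monomial n a =>
    have hn : (-1:ℝ) < (n:ℝ) := by
      have := Nat.cast_nonneg (α := ℝ) n; linarith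
    have h := integrable_rpow_mul_exp_neg_mul_sq (b := 1/2) (by norm_num) hn
    simp_rw [Real.rpow_natCast] at h
    have h2 := h.const_mul (a * (2 * Real.pi) ^ (-(1:ℝ)/2))
    refine h2.congr (Filter.Eventually.of_forall fun x => ?_)
    have : -(1/2:ℝ) * x^2 = -x^2/2 := by ring
    simp only [this, Polynomial.eval_monomial, stdGaussianPDF]
    ring

lemma setIntegral_gaussianReal (f : ℝ → ℝ) {s : Set ℝ} (hs : MeasurableSet s) :
    ∫ t in s, f t ∂(gaussianReal 0 1) = ∫ t in s, f t * stdGaussianPDF t := by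
  rw [gaussianReal_of_var_ne_zero 0 one_ne_zero]
  have hmeas : Measurable (fun x => (gaussianPDFReal 0 1 x).toNNReal) :=
    (measurable_gaussianPDFReal 0 1).real_toNNReal
  have : (gaussianPDF 0 1) = fun x => (((gaussianPDFReal 0 1 x).toNNReal : ℝ≥0) : ℝ≥0∞) := rfl
  rw [this, setIntegral_withDensity_eq_setIntegral_smul hmeas f hs]
  refine setIntegral_congr_fun hs (fun x _ => ?_)
  rw [NNReal.smul_def, Real.coe_toNNReal _ (gaussianPDFReal_nonneg 0 1 x), stdGaussianPDF_eq,
    smul_eq_mul, mul_comm]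

/-- E[1(Z > z) H_q(Z)] = H_{q-1}(z) φ(z) for a standard Gaussian Z and q ≥ 1. -/
theorem hermite_coeff_indicator (z : ℝ) (q : ℕ) (hq : 1 ≤ q) :
    ∫ t in Set.Ioi z, hermiteR q t ∂(gaussianReal 0 1) = hermiteR (q - 1) z * stdGaussianPDF z := by
  obtain ⟨n, rfl⟩ : ∃ n, q = n + 1 := ⟨q - 1, (Nat.succ_pred_eq_of_pos hq).symm⟩
  rw [setIntegral_gaussianReal _ measurableSet_Ioi]
  have key : ∫ t in Set.Ioi z, hermiteR (n+1) t * stdGaussianPDF t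
      = 0 - -(hermiteR n z * stdGaussianPDF z) := by
    apply integral_Ioi_of_hasDerivAt_of_tendsto
      (f := fun s => -(hermiteR n s * stdGaussianPDF s))
    · exact ((hasDerivAt_hermite_mul n z).neg.continuousAt).continuousWithinAt
    · intro x _
      exact (hasDerivAt_hermite_mul n x).neg.congr_deriv (neg_neg _)
    · have := (integrable_poly_mul_pdf ((Polynomial.hermite (n+1)).map (algebraMap ℤ ℝ))).integrableOn
        (s := Set.Ioi z)
      refine this.congr_fun (fun x _ => ?_) measurableSet_Ioi
      rw [hermiteR_eq]
    · have := (tendsto_poly_mul_pdf ((Polynomial.hermite n).map (algebraMap ℤ ℝ))).neg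
      rw [neg_zero] at this
      refine this.congr (fun x => ?_)
      rw [hermiteR_eq]
  rw [key]
  simp
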